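/- arXiv:2104.10286 — 2 statements merged into one kernel-verified Lean document; each statement's English description precedes it below -/
import Mathlib

section
/- For every alphabet Σ and all w, a ∈ ℕ⁺, the (a+1)-ary relation R̃(Σ,w,a) = {(D, s₁,…,sₐ) : D ∈ B(Σ,w,k) for some k ∈ ℕ⁺ and s₁,…,sₐ ∈ Σ^{≤k}} is regular. -/
open FirstOrder

/-- A language (set of strings) is regular if it is recognized by a
deterministic finite automaton with finitely many states. -/
def LangRegular {β : Type} (L : Set (List β)) : Prop :=
  Language.IsRegular (L : Language β)

/-- A `(Σ,w)`-layer: left/right frontiers contained in `{0,…,w−1}`, a set of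
transitions labelled by symbols of `Σ` or the padding symbol (`none`), sets of
initial and final states, and two boolean flags. -/
structure Layer (σ : Type) (w : ℕ) where
  left : Set (Fin w)
  right : Set (Fin w)
  trans : Set (Fin w × Option σ × Fin w)
  initial : Set (Fin w)
  final : Set (Fin w)
  ini : Bool
  fin : Bool
  trans_mem : ∀ t ∈ trans, t.1 ∈ left ∧ t.2.2 ∈ right
  initial_sub : initial ⊆ left
  final_sub : final ⊆ right
  initial_empty : ini = false → initial = ∅
  final_empty : fin = false → final = ∅

instance {σ : Type} {w : ℕ} : Inhabited (Layer σ w) :=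
  ⟨{ left := ∅, right := ∅, trans := ∅, initial := ∅, final := ∅,
     ini := false, fin := false,
     trans_mem := by simp, initial_sub := by simp, final_sub := by simp,
     initial_empty := fun _ => rfl, final_empty := fun _ => rfl }⟩

/-- A string of layers is a `(Σ,w)`-ODD: it is non-empty, consecutive frontiers
match, the initial flag is set exactly on the first layer, and the final flag is
set exactly on the last layer. -/
def IsODD {σ : Type} {w : ℕ} (D : List (Layer σ w)) : Prop :=
  D ≠ [] ∧
  (∀ i : ℕ, (h : i + 1 < D.length) →
    (D[i + 1]'h).left = (D[i]'(by omega)).right) ∧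
  (∀ i : ℕ, (h : i < D.length) →
    ((D[i]'h).ini = true ↔ i = 0) ∧ ((D[i]'h).fin = true ↔ i = D.length - 1))

/-- Acceptance of a (non-empty) string `s` of length at most `|D|` by the ODD `D`:
there is a sequence of compatible transitions, reading the symbols of `s` followed
by padding symbols, from an initial state of the first layer to a final state of
the last layer. -/
def OddAccepts {σ : Type} {w : ℕ} (D : List (Layer σ w)) (s : List σ) : Prop :=
  s ≠ [] ∧ s.length ≤ D.length ∧
  ∃ st : ℕ → Fin w,
    (∀ i : ℕ, (h : i < D.length) → (st i, s[i]?, st (i + 1)) ∈ (D[i]'h).trans) ∧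
    ∀ h : 0 < D.length,
      st 0 ∈ (D[0]'h).initial ∧ st D.length ∈ (D[D.length - 1]'(by omega)).final

/-- The language of an ODD. -/
def OddLang {σ : Type} {w : ℕ} (D : List (Layer σ w)) : Set (List σ) :=
  { s | OddAccepts D s }

/-- Convolution (tensor product) of a family of strings over (possibly different)
alphabets: the string of length `max_i |u_i|` whose `j`-th symbol has `i`-th
component the `j`-th symbol of `u_i` if `j < |u_i|`, and the padding symbol `none`
otherwise. -/
def convD {a : ℕ} {α : Fin a → Type} (us : ∀ i, List (α i)) :
    List (∀ i, Option (α i)) :=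
  List.ofFn fun j : Fin (Finset.univ.sup fun i => (us i).length) =>
    fun i => (us i)[(j : ℕ)]?

/-- A relation of tuples of strings is regular if its associated language, the set
of convolutions of its tuples, is a regular language. -/
def RegularRelD {a : ℕ} {α : Fin a → Type} (R : Set (∀ i, List (α i))) : Prop :=
  LangRegular { x | ∃ us ∈ R, convD us = x }

/-- Convolution of a pair of strings over two alphabets. -/
def conv2 {α β : Type} (u : List α) (v : List β) : List (Option α × Option β) :=
  List.ofFn fun j : Fin (max u.length v.length) => (u[(j : ℕ)]?, v[(j : ℕ)]?)

/-- A binary relation of strings is regular if its associated language is regular. -/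
def Regular2 {α β : Type} (R : Set (List α × List β)) : Prop :=
  LangRegular { x | ∃ p ∈ R, conv2 p.1 p.2 = x }

/-- Convolution of an `(a+1)`-tuple of strings `(u, v₁, …, vₐ)` where `u` is over
the alphabet `α` and the `v`s over the alphabet `β`. -/
def conv1a {α β : Type} {a : ℕ} (u : List α) (vs : Fin a → List β) :
    List (Option α × (Fin a → Option β)) :=
  List.ofFn fun j : Fin (max u.length (Finset.univ.sup fun i => (vs i).length)) =>
    (u[(j : ℕ)]?, fun i => (vs i)[(j : ℕ)]?)

/-- An `(a+1)`-ary relation whose first coordinate is a string over `α` and whose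
remaining `a` coordinates are strings over `β` is regular if its associated
language of convolutions is regular. -/
def Regular1a {α β : Type} {a : ℕ} (R : Set (List α × (Fin a → List β))) : Prop :=
  LangRegular { x | ∃ p ∈ R, conv1a p.1 p.2 = x }

/-- The `a`-fold tensor product `L^{⊗a}` of a language `L`. -/
def tensorLang {σ : Type} {a : ℕ} (L : Set (List σ)) :
    Set (List (Fin a → Option σ)) :=
  { x | ∃ us : Fin a → List σ, (∀ i, us i ∈ L) ∧ convD us = x }

/-- The purely relational first-order vocabulary with `r` relation symbols of
arities `ar 0, …, ar (r-1)`. -/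
def vocLang (r : ℕ) (ar : Fin r → ℕ) : FirstOrder.Language :=
  { Functions := fun _ => Empty, Relations := fun n => { i : Fin r // ar i = n } }

/-- A tuple `(D₀, D₁, …, Dᵣ)` is `(Σ,w,τ)`-structural: all ODDs have a common
length, `D₀` is over `Σ`, `Dᵢ` is over `Σ^{⊗aᵢ}` (with padding components), and
`L(Dᵢ) ⊆ L(D₀)^{⊗aᵢ}`. -/
def IsStructural {σ : Type} {w r : ℕ} {ar : Fin r → ℕ}
    (D₀ : List (Layer σ w))
    (Ds : ∀ i : Fin r, List (Layer (Fin (ar i) → Option σ) w)) : Prop :=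
  IsODD D₀ ∧
  ∀ i : Fin r, IsODD (Ds i) ∧ (Ds i).length = D₀.length ∧
    OddLang (Ds i) ⊆ tensorLang (OddLang D₀)

/-- The `τ`-structure derived from a structural tuple: its domain is `L(D₀)` and
the `i`-th relation holds of `(u₁,…,u_{aᵢ})` iff `u₁⊗⋯⊗u_{aᵢ} ∈ L(Dᵢ)`. -/
def derivedStr {σ : Type} {w r : ℕ} {ar : Fin r → ℕ}
    (D₀ : List (Layer σ w))
    (Ds : ∀ i : Fin r, List (Layer (Fin (ar i) → Option σ) w)) :
    (vocLang r ar).Structure { s : List σ // s ∈ OddLang D₀ } where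
  funMap := fun f _ => f.elim
  RelMap := fun {n} Rl x =>
    match Rl with
    | ⟨i, h⟩ =>
      convD (fun m : Fin (ar i) => (x (Fin.cast h m)).val) ∈ OddLang (Ds i)

/-- The type of `(r+1)`-tuples of ODDs `(D₀, D₁, …, Dᵣ)`. -/
def StructTuple (σ : Type) (w r : ℕ) (ar : Fin r → ℕ) : Type :=
  List (Layer σ w) × ((i : Fin r) → List (Layer (Fin (ar i) → Option σ) w))

/-- Convolution of an `(r+1)`-tuple of ODDs. -/
def convTuple {σ : Type} {w r : ℕ} {ar : Fin r → ℕ} (q : StructTuple σ w r ar) :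
    List (Option (Layer σ w) ×
      ((i : Fin r) → Option (Layer (Fin (ar i) → Option σ) w))) :=
  List.ofFn fun j : Fin (max q.1.length (Finset.univ.sup fun i => (q.2 i).length)) =>
    (q.1[(j : ℕ)]?, fun i => (q.2 i)[(j : ℕ)]?)

/-- A set of `(r+1)`-tuples of ODDs is regular if its associated language of
convolutions is regular. -/
def RegularTuple {σ : Type} {w r : ℕ} {ar : Fin r → ℕ}
    (R : Set (StructTuple σ w r ar)) : Prop :=
  LangRegular { x | ∃ q ∈ R, convTuple q = x }

/-- The type of `(r+1+p)`-tuples `(D₀, D₁, …, Dᵣ, v₁, …, v_p)`. -/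
def StructTupleV (σ : Type) (w r : ℕ) (ar : Fin r → ℕ) (p : ℕ) : Type :=
  StructTuple σ w r ar × (Fin p → List σ)

/-- Convolution of an `(r+1+p)`-tuple `(D₀, D₁, …, Dᵣ, v₁, …, v_p)`. -/
def convStruct {σ : Type} {w r : ℕ} {ar : Fin r → ℕ} {p : ℕ}
    (q : StructTupleV σ w r ar p) :
    List ((Option (Layer σ w) ×
        ((i : Fin r) → Option (Layer (Fin (ar i) → Option σ) w))) ×
      (Fin p → Option σ)) :=
  List.ofFn fun j : Fin (max (max q.1.1.length
      (Finset.univ.sup fun i => (q.1.2 i).length))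
      (Finset.univ.sup fun t => (q.2 t).length)) =>
    ((q.1.1[(j : ℕ)]?, fun i => (q.1.2 i)[(j : ℕ)]?), fun t => (q.2 t)[(j : ℕ)]?)

/-- A set of `(r+1+p)`-tuples is regular if its associated language of
convolutions is regular. -/
def RegularStruct {σ : Type} {w r : ℕ} {ar : Fin r → ℕ} {p : ℕ}
    (R : Set (StructTupleV σ w r ar p)) : Prop :=
  LangRegular { x | ∃ q ∈ R, convStruct q = x }

theorem isSome_getElem' {α : Type*} (l : List α) (i : ℕ) :
    l[i]?.isSome = true ↔ i < l.length := by
  rw [Option.isSome_iff_exists]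
  constructor
  · rintro ⟨v, hv⟩; exact (List.getElem?_eq_some_iff.mp hv).1
  · intro h; exact ⟨l[i], List.getElem?_eq_getElem h⟩

theorem conv1a_length {α β : Type} {a' : ℕ} (u : List α) (vs : Fin a' → List β) :
    (conv1a u vs).length = max u.length (Finset.univ.sup fun i => (vs i).length) := by
  simp [conv1a]

theorem conv1a_getElem {α β : Type} {a' : ℕ} (u : List α) (vs : Fin a' → List β)
    (j : ℕ) (h : j < (conv1a u vs).length) :
    (conv1a u vs)[j]'h = (u[j]?, fun i => (vs i)[j]?) := by
  simp [conv1a]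
namespace Stmt12Aux

variable {σ : Type} {w a : ℕ}

/-- Symbols of the convolution language. -/
abbrev Sym (σ : Type) (w a : ℕ) := Option (Layer σ w) × (Fin a → Option σ)

/-- Extract the layer from a symbol. -/
noncomputable def lyr (c : Sym σ w a) : Layer σ w := c.1.getD default

/-- Pointwise characterization of the convolution language. -/
def Cond (x : List (Sym σ w a)) : Prop :=
  x ≠ [] ∧
  (∀ j (h : j < x.length), (x[j]'h).1.isSome = true) ∧
  (∀ j (h : j + 1 < x.length),
    (lyr (x[j+1]'h)).left = (lyr (x[j]'(by omega))).right) ∧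
  (∀ j (h : j < x.length), (lyr (x[j]'h)).ini = decide (j = 0)) ∧
  (∀ j (h : j < x.length), (lyr (x[j]'h)).fin = decide (j = x.length - 1)) ∧
  (∀ i, ∀ h : 0 < x.length, ((x[0]'h).2 i).isSome = true) ∧
  (∀ i, ∀ j, ∀ h : j + 1 < x.length, ((x[j]'(by omega)).2 i).isSome = false →
    ((x[j+1]'h).2 i).isSome = false)

theorem cond_prefix (x : List (Sym σ w a)) (hx : Cond x) (i : Fin a) :
    ∃ m, 1 ≤ m ∧ m ≤ x.length ∧ ∀ j (h : j < x.length),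
      (((x[j]'h).2 i).isSome = true ↔ j < m) := by
  classical
  obtain ⟨hne, _, _, _, _, h6, h7⟩ := hx
  have hlen : 0 < x.length := List.length_pos_iff.mpr hne
  have hex : ∃ j, ∀ h : j < x.length, ((x[j]'h).2 i).isSome = false :=
    ⟨x.length, fun h => absurd h (lt_irrefl _)⟩
  refine ⟨Nat.find hex, ?_, Nat.find_le fun h => absurd h (lt_irrefl _), ?_⟩
  · rw [Nat.one_le_iff_ne_zero]
    intro h0
    have := (h0 ▸ Nat.find_spec hex) hlen
    rw [h6 i hlen] at this
    simp at this  -- maybe wrong name; fix later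
  · -- auxiliary: everything at or beyond `Nat.find hex` is none
    have habove : ∀ j, Nat.find hex ≤ j → ∀ h : j < x.length,
        ((x[j]'h).2 i).isSome = false := by
      intro j hj
      induction j, hj using Nat.le_induction with
      | base => exact Nat.find_spec hex
      | succ k hk IH => exact fun h => h7 i k h (IH (by omega))
    intro j h
    constructor
    · intro hs
      by_contra hlt
      have := habove j (by omega) h
      rw [hs] at this
      simp at this
    · intro hlt
      have := Nat.find_min hex hlt
      push_neg at this
      obtain ⟨h', hs⟩ := this
      exact Bool.not_eq_false _ |>.mp hs  -- fix later maybe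

end Stmt12Aux
namespace Stmt12Aux

theorem lang_eq {σ : Type} [Nonempty σ] {w a : ℕ} :
    { x | ∃ p ∈ { p : List (Layer σ w) × (Fin a → List σ) |
        IsODD p.1 ∧ ∀ i, p.2 i ≠ [] ∧ (p.2 i).length ≤ p.1.length },
      conv1a p.1 p.2 = x } = { x : List (Sym σ w a) | Cond x } := by
  ext x
  simp only [Set.mem_setOf_eq]
  constructor
  · rintro ⟨⟨D, vs⟩, ⟨hODD, hvs⟩, rfl⟩
    replace hODD : IsODD D := hODD
    replace hvs : ∀ i, vs i ≠ [] ∧ (vs i).length ≤ D.length := hvs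
    show Cond (conv1a D vs)
    have hn0 : 0 < D.length := List.length_pos_iff.mpr hODD.1
    have hsup : (Finset.univ.sup fun i => (vs i).length) ≤ D.length :=
      Finset.sup_le fun i _ => (hvs i).2
    have hlen : (conv1a D vs).length = D.length := by
      rw [conv1a_length]; exact max_eq_left hsup
    have hfst : ∀ j (h : j < (conv1a D vs).length),
        ((conv1a D vs)[j]'h).1 = D[j]? := by
      intro j h; rw [conv1a_getElem]
    have hsnd : ∀ j (h : j < (conv1a D vs).length) (i : Fin a),
        ((conv1a D vs)[j]'h).2 i = (vs i)[j]? := by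
      intro j h i; rw [conv1a_getElem]
    have hlyr : ∀ j (h : j < (conv1a D vs).length),
        lyr ((conv1a D vs)[j]'h) = D[j]'(hlen ▸ h) := by
      intro j h
      rw [lyr, hfst, List.getElem?_eq_getElem (hlen ▸ h), Option.getD_some]
    refine ⟨List.ne_nil_of_length_pos (by omega), ?_, ?_, ?_, ?_, ?_, ?_⟩
    · intro j h
      rw [hfst j h, isSome_getElem']
      omega
    · intro j h
      rw [hlyr, hlyr]
      exact hODD.2.1 j (by omega)
    · intro j h
      rw [hlyr]
      have hi := (hODD.2.2 j (by omega)).1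
      by_cases hj : j = 0
      · subst hj; simp [hi.mpr rfl]
      · simp only [hj, decide_false]
        rw [← Bool.not_eq_true]
        intro hc; exact hj (hi.mp hc)
    · intro j h
      rw [hlyr]
      have hi := (hODD.2.2 j (by omega)).2
      have hl2 : (conv1a D vs).length - 1 = D.length - 1 := by rw [hlen]
      rw [hl2]
      by_cases hj : j = D.length - 1
      · subst hj; simp [hi.mpr rfl]
      · simp only [hj, decide_false]
        rw [← Bool.not_eq_true]
        intro hc; exact hj (hi.mp hc)
    · intro i h
      rw [hsnd, isSome_getElem']
      exact List.length_pos_iff.mpr (hvs i).1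
    · intro i j h hfalse
      rw [hsnd] at hfalse ⊢
      simp only [Bool.eq_false_iff, ne_eq, isSome_getElem'] at hfalse ⊢
      omega
  · intro hx
    obtain ⟨hne, h2, h3, h4, h5, h6, h7⟩ := id hx
    have hn : 0 < x.length := List.length_pos_iff.mpr hne
    haveI : Inhabited σ := Classical.inhabited_of_nonempty inferInstance
    choose m hm1 hmn hmiff using fun i => cond_prefix x hx i
    refine ⟨⟨List.ofFn fun j : Fin x.length => lyr (x[(j : ℕ)]'j.2),
      fun i => List.ofFn fun j : Fin (m i) =>
        ((x[(j : ℕ)]'(lt_of_lt_of_le j.2 (hmn i))).2 i).getD default⟩,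
      ⟨⟨?_, ?_, ?_⟩, ?_⟩, ?_⟩
    · simp only [ne_eq, List.ofFn_eq_nil_iff]
      omega
    · intro j h
      simp only [List.length_ofFn] at h
      rw [List.getElem_ofFn, List.getElem_ofFn]
      exact h3 j h
    · intro j h
      simp only [List.length_ofFn] at h
      rw [List.getElem_ofFn]
      constructor
      · rw [h4 j h]; simp
      · rw [h5 j h]; simp [List.length_ofFn]
    · intro i
      constructor
      · have := hm1 i
        intro hc
        have := congrArg List.length hc
        simp only [List.length_ofFn, List.length_nil] at this
        omega
      · simp only [List.length_ofFn]
        exact hmn i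
    · show conv1a _ _ = x
      have hDlen : (List.ofFn fun j : Fin x.length => lyr (x[(j:ℕ)]'j.2)).length
          = x.length := List.length_ofFn
      have hclen : (conv1a (List.ofFn fun j : Fin x.length => lyr (x[(j:ℕ)]'j.2))
          (fun i => List.ofFn fun j : Fin (m i) =>
            ((x[(j : ℕ)]'(lt_of_lt_of_le j.2 (hmn i))).2 i).getD default)).length
          = x.length := by
        rw [conv1a_length, hDlen]
        refine max_eq_left (Finset.sup_le fun i _ => ?_)
        simp only [List.length_ofFn]
        exact hmn i
      apply List.ext_getElem (by rw [hclen])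
      intro j h h'
      rw [conv1a_getElem]
      have hj : j < x.length := h'
      rw [Prod.ext_iff]
      constructor
      · simp only
        rw [List.getElem?_eq_getElem (by rw [hDlen]; exact hj), List.getElem_ofFn]
        obtain ⟨L, hL⟩ := Option.isSome_iff_exists.mp (h2 j hj)
        simp [lyr, hL]
      · funext i
        simp only
        by_cases hjm : j < m i
        · rw [List.getElem?_eq_getElem (by simp only [List.length_ofFn]; exact hjm),
            List.getElem_ofFn]
          obtain ⟨v, hv⟩ := Option.isSome_iff_exists.mp ((hmiff i j hj).mpr hjm)
          simp [hv]
        · rw [List.getElem?_eq_none (by simp only [List.length_ofFn]; omega)]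
          have hnot : ¬ ((x[j]'hj).2 i).isSome = true :=
            fun hc => hjm ((hmiff i j hj).mp hc)
          cases hxx : (x[j]'hj).2 i with
          | none => rfl
          | some v => rw [hxx] at hnot; simp at hnot

end Stmt12Aux
namespace Stmt12Aux

variable {σ : Type} {w a : ℕ}

/-- Conditions maintained during a run, before knowing the string ended. -/
def Pre (x : List (Sym σ w a)) : Prop :=
  x ≠ [] ∧
  (∀ j (h : j < x.length), (x[j]'h).1.isSome = true) ∧
  (∀ j (h : j + 1 < x.length),
    (lyr (x[j+1]'h)).left = (lyr (x[j]'(by omega))).right) ∧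
  (∀ j (h : j < x.length), (lyr (x[j]'h)).ini = decide (j = 0)) ∧
  (∀ j (h : j + 1 < x.length), (lyr (x[j]'(by omega))).fin = false) ∧
  (∀ i, ∀ h : 0 < x.length, ((x[0]'h).2 i).isSome = true) ∧
  (∀ i, ∀ j, ∀ h : j + 1 < x.length, ((x[j]'(by omega)).2 i).isSome = false →
    ((x[j+1]'h).2 i).isSome = false)

/-- State type of the automaton: dead, start, or a summary of the last symbol. -/
abbrev St (w a : ℕ) := Option (Option (Set (Fin w) × Bool × (Fin a → Bool)))

/-- Invariant of mid-run states. -/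
def Inv (x : List (Sym σ w a)) (R : Set (Fin w)) (b : Bool) (al : Fin a → Bool) :
    Prop :=
  Pre x ∧ ∃ h : 0 < x.length,
    R = (lyr (x[x.length-1]'(by omega))).right ∧
    b = (lyr (x[x.length-1]'(by omega))).fin ∧
    al = fun i => ((x[x.length-1]'(by omega)).2 i).isSome

open scoped Classical in
/-- The transition function. -/
noncomputable def stp : St w a → Sym σ w a → St w a := fun q c =>
  match q, c.1 with
  | none, _ => none
  | some none, none => none
  | some none, some L =>
      if L.ini = true ∧ ∀ i, (c.2 i).isSome = true
      then some (some (L.right, L.fin, fun i => (c.2 i).isSome)) else none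
  | some (some _), none => none
  | some (some (R0, b0, al0)), some L =>
      if b0 = false ∧ L.ini = false ∧ L.left = R0 ∧
          ∀ i, al0 i = false → (c.2 i).isSome = false
      then some (some (L.right, L.fin, fun i => (c.2 i).isSome)) else none

/-- The DFA recognizing the convolution language. -/
noncomputable def M (σ : Type) (w a : ℕ) : DFA (Sym σ w a) (St w a) where
  step := stp
  start := some none
  accept := { q | ∃ R al, q = some (some (R, true, al)) }

theorem lyr_some (L : Layer σ w) (f : Fin a → Option σ) :
    lyr ((some L, f) : Sym σ w a) = L := rfl

theorem stp_ne (q : St w a) (c : Sym σ w a) : stp q c ≠ some none := by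
  obtain ⟨oL, f⟩ := c
  rcases q with _ | (_ | ⟨R0, b0, al0⟩) <;> cases oL <;>
    simp only [stp] <;> try split_ifs
  all_goals simp

theorem inv_single (c : Sym σ w a) (R : Set (Fin w)) (b : Bool) (al : Fin a → Bool) :
    Inv [c] R b al ↔
      (c.1.isSome = true ∧ (lyr c).ini = true ∧ (∀ i, (c.2 i).isSome = true) ∧
        R = (lyr c).right ∧ b = (lyr c).fin ∧ al = fun i => (c.2 i).isSome) := by
  constructor
  · rintro ⟨⟨-, p2, p3, p4, p5, p6, p7⟩, hh, hR, hb, hal⟩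
    have e0 : ([c])[0] = c := rfl
    refine ⟨p2 0 (by simp), ?_, fun i => p6 i (by simp), hR, hb, hal⟩
    have := p4 0 (by simp)
    simpa using this
  · rintro ⟨h1, h2, h3, hR, hb, hal⟩
    refine ⟨⟨by simp, ?_, ?_, ?_, ?_, ?_, ?_⟩, by simp, hR, hb, hal⟩
    · intro j h
      have hj : j = 0 := by simpa using h
      subst hj; exact h1
    · intro j h; simp at h
    · intro j h
      have hj : j = 0 := by simpa using h
      subst hj; simpa using h2
    · intro j h; simp at h
    · intro i h; exact h3 i
    · intro i j h; simp at h

theorem inv_append (x : List (Sym σ w a)) (c : Sym σ w a) (hx : x ≠ [])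
    (R0 : Set (Fin w)) (b0 : Bool) (al0 : Fin a → Bool)
    (R : Set (Fin w)) (b : Bool) (al : Fin a → Bool)
    (h0 : Inv x R0 b0 al0) :
    Inv (x ++ [c]) R b al ↔
      (c.1.isSome = true ∧ b0 = false ∧ (lyr c).ini = false ∧
        (lyr c).left = R0 ∧ (∀ i, al0 i = false → (c.2 i).isSome = false) ∧
        R = (lyr c).right ∧ b = (lyr c).fin ∧ al = fun i => (c.2 i).isSome) := by
  obtain ⟨⟨-, p2, p3, p4, p5, p6, p7⟩, hh, hR0, hb0, hal0⟩ := h0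
  have hn : 0 < x.length := hh
  have hlen : (x ++ [c]).length = x.length + 1 := by simp
  have at_n : ∀ (hh' : x.length < (x ++ [c]).length),
      (x ++ [c])[x.length]'hh' = c := fun hh' =>
    List.getElem_concat_length rfl hh'
  have at_lt : ∀ j (h : j < x.length),
      (x ++ [c])[j]'(by simp; omega) = x[j]'h := fun j h =>
    List.getElem_append_left h
  have hidx : ∀ (hh' : (x++[c]).length - 1 < (x++[c]).length),
      (x++[c])[(x++[c]).length - 1]'hh' = c := fun hh' =>
    List.getElem_concat_length (by simp) hh'
  constructor
  · rintro ⟨⟨-, q2, q3, q4, q5, q6, q7⟩, hh', hR, hb, hal⟩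
    rw [hidx] at hR hb hal
    refine ⟨?_, ?_, ?_, ?_, ?_, hR, hb, hal⟩
    · have := q2 x.length (by omega)
      rwa [at_n] at this
    · have := q5 (x.length - 1) (by omega)
      rw [at_lt _ (by omega)] at this
      rw [hb0]
      exact this
    · have := q4 x.length (by omega)
      rw [at_n, decide_eq_false (by omega)] at this
      exact this
    · have hsucc : x.length - 1 + 1 = x.length := by omega
      have := q3 (x.length - 1) (by omega)
      simp only [hsucc] at this
      rw [at_n, at_lt _ (by omega)] at this
      rw [this, hR0]
    · intro i hfi
      have hf : ((x[x.length - 1]'(by omega)).2 i).isSome = false := by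
        have := congrFun hal0 i
        rw [hfi] at this
        exact this.symm
      have := q7 i (x.length - 1) (by omega)
      have hsucc : x.length - 1 + 1 = x.length := by omega
      simp only [hsucc] at this
      rw [at_n, at_lt _ (by omega)] at this
      exact this hf
  · rintro ⟨hc1, hb0f, hini, hleft, halc, hR, hb, hal⟩
    refine ⟨⟨by simp, ?_, ?_, ?_, ?_, ?_, ?_⟩, by simp, ?_, ?_, ?_⟩
    · intro j h
      rcases (by simp at h; omega : j < x.length ∨ j = x.length) with hj | hj
      · rw [at_lt _ hj]; exact p2 j hj
      · subst hj; rw [at_n]; exact hc1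
    · intro j h
      rcases (by simp at h; omega : j + 1 < x.length ∨ j + 1 = x.length)
        with hj | hj
      · rw [at_lt _ hj, at_lt _ (by omega)]
        exact p3 j hj
      · have hj' : j = x.length - 1 := by omega
        subst hj'
        have e1 : (x ++ [c])[x.length - 1 + 1]'h = c :=
          List.getElem_concat_length (by omega) h
        rw [e1, at_lt _ (by omega), hleft, hR0]
    · intro j h
      rcases (by simp at h; omega : j < x.length ∨ j = x.length) with hj | hj
      · rw [at_lt _ hj]; exact p4 j hj
      · subst hj; rw [at_n, hini, decide_eq_false (by omega)]
    · intro j h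
      rcases (by simp at h; omega : j + 1 < x.length ∨ j + 1 = x.length)
        with hj | hj
      · rw [at_lt _ (by omega)]; exact p5 j hj
      · have hj' : j = x.length - 1 := by omega
        subst hj'
        rw [at_lt _ (by omega)]
        rw [hb0] at hb0f
        exact hb0f
    · intro i h
      rw [at_lt _ (by omega)]
      exact p6 i hn
    · intro i j h hfi
      rcases (by simp at h; omega : j + 1 < x.length ∨ j + 1 = x.length)
        with hj | hj
      · rw [at_lt _ (by omega)] at hfi
        rw [at_lt _ hj]
        exact p7 i j hj hfi
      · have hj' : j = x.length - 1 := by omega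
        subst hj'
        have e1 : (x ++ [c])[x.length - 1 + 1]'h = c :=
          List.getElem_concat_length (by omega) h
        rw [e1]
        rw [at_lt _ (by omega)] at hfi
        apply halc
        rw [hal0] at *
        exact hfi
    · rw [hidx]; exact hR
    · rw [hidx]; exact hb
    · rw [hidx]; exact hal

theorem inv_prefix (x : List (Sym σ w a)) (c : Sym σ w a)
    (R : Set (Fin w)) (b : Bool) (al : Fin a → Bool)
    (hx : x ≠ []) (h : Inv (x ++ [c]) R b al) :
    ∃ R' b' al', Inv x R' b' al' := by
  obtain ⟨⟨-, q2, q3, q4, q5, q6, q7⟩, hh', -, -, -⟩ := h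
  have hn : 0 < x.length := List.length_pos_iff.mpr hx
  have at_lt : ∀ j (h : j < x.length),
      (x ++ [c])[j]'(by simp; omega) = x[j]'h := fun j h =>
    List.getElem_append_left h
  refine ⟨_, _, _, ⟨⟨hx, ?_, ?_, ?_, ?_, ?_, ?_⟩, hn, rfl, rfl, rfl⟩⟩
  · intro j h
    have := q2 j (by simp; omega)
    rwa [at_lt _ h] at this
  · intro j h
    have := q3 j (by simp; omega)
    rwa [at_lt _ h, at_lt _ (by omega)] at this
  · intro j h
    have := q4 j (by simp; omega)
    rwa [at_lt _ h] at this
  · intro j h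
    have := q5 j (by simp; omega)
    rwa [at_lt _ (by omega)] at this
  · intro i h
    have := q6 i (by simp)
    rwa [at_lt _ h] at this
  · intro i j h hfi
    have := q7 i j (by simp; omega)
    rw [at_lt _ (by omega), at_lt _ h] at this
    exact this hfi

end Stmt12Aux
namespace Stmt12Aux

variable {σ : Type} {w a : ℕ}

theorem key (x : List (Sym σ w a)) :
    ((M σ w a).evalFrom (M σ w a).start x = some none ↔ x = []) ∧
    (∀ R b al, (M σ w a).evalFrom (M σ w a).start x = some (some (R, b, al)) ↔
      Inv x R b al) := by
  induction x using List.reverseRecOn with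
  | nil =>
    constructor
    · simp [DFA.evalFrom, M]
    · intro R b al
      constructor
      · intro hh; simp [DFA.evalFrom, M] at hh
      · rintro ⟨⟨hne, -⟩, -⟩; exact absurd rfl hne
  | append_singleton x c ih =>
    obtain ⟨ihA, ihB⟩ := ih
    rw [DFA.evalFrom_append_singleton]
    have hms : (M σ w a).step = stp := rfl
    rw [hms]
    cases hq : (M σ w a).evalFrom (M σ w a).start x with
    | none =>
      constructor
      · exact iff_of_false (stp_ne _ _) (by simp)
      · intro R b al
        refine iff_of_false (by show stp none c ≠ _; simp [stp]) ?_
        intro hInv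
        by_cases hxe : x = []
        · rw [ihA.mpr hxe] at hq; exact (by simp at hq)
        · obtain ⟨R', b', al', hI⟩ := inv_prefix x c R b al hxe hInv
          rw [(ihB R' b' al').mpr hI] at hq
          simp at hq
    | some o =>
      cases o with
      | none =>
        have hxe : x = [] := ihA.mp hq
        subst hxe
        simp only [List.nil_append]
        constructor
        · exact iff_of_false (stp_ne _ _) (by simp)
        · intro R b al
          rw [inv_single]
          show stp (some none) c = _ ↔ _
          obtain ⟨oL, f⟩ := c
          cases oL with
          | none => simp [stp]
          | some L =>
            simp only [stp, lyr_some]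
            split_ifs with hcond
            · simp only [Option.some.injEq, Prod.mk.injEq]
              constructor
              · rintro ⟨h1, h2, h3⟩
                exact ⟨rfl, hcond.1, hcond.2, h1.symm, h2.symm, h3.symm⟩
              · rintro ⟨-, -, -, h1, h2, h3⟩
                exact ⟨h1.symm, h2.symm, h3.symm⟩
            · refine iff_of_false (by simp) ?_
              rintro ⟨-, h2, h3, -, -, -⟩
              exact hcond ⟨h2, h3⟩
      | some p =>
        obtain ⟨R0, b0, al0⟩ := p
        have hInvx := (ihB R0 b0 al0).mp hq
        have hxne : x ≠ [] := hInvx.1.1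
        constructor
        · exact iff_of_false (stp_ne _ _) (by simp)
        · intro R b al
          rw [inv_append x c hxne R0 b0 al0 R b al hInvx]
          show stp (some (some (R0, b0, al0))) c = _ ↔ _
          obtain ⟨oL, f⟩ := c
          cases oL with
          | none => simp [stp]
          | some L =>
            simp only [stp, lyr_some]
            split_ifs with hcond
            · simp only [Option.some.injEq, Prod.mk.injEq, Option.isSome_some]
              constructor
              · rintro ⟨h1, h2, h3⟩
                exact ⟨trivial, hcond.1, hcond.2.1, hcond.2.2.1, hcond.2.2.2,
                  h1.symm, h2.symm, h3.symm⟩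
              · rintro ⟨-, -, -, -, -, h1, h2, h3⟩
                exact ⟨h1.symm, h2.symm, h3.symm⟩
            · refine iff_of_false (by simp) ?_
              rintro ⟨-, h1, h2, h3, h4, -, -, -⟩
              exact hcond ⟨h1, h2, h3, h4⟩

theorem accepts_eq : (M σ w a).accepts = { x : List (Sym σ w a) | Cond x } := by
  ext x
  rw [DFA.mem_accepts]
  show (M σ w a).evalFrom (M σ w a).start x ∈ (M σ w a).accept ↔ _
  constructor
  · rintro ⟨R, al, hx⟩
    obtain ⟨⟨hne, p2, p3, p4, p5, p6, p7⟩, hh, -, hb, -⟩ :=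
      ((key x).2 R true al).mp hx
    refine ⟨hne, p2, p3, p4, ?_, p6, p7⟩
    intro j h
    by_cases hj : j = x.length - 1
    · subst hj
      rw [← hb, decide_eq_true rfl]
    · rw [decide_eq_false hj]
      exact p5 j (by omega)
  · rintro ⟨hne, p2, p3, p4, p5, p6, p7⟩
    have hn : 0 < x.length := List.length_pos_iff.mpr hne
    refine ⟨(lyr (x[x.length-1]'(by omega))).right,
      fun i => ((x[x.length-1]'(by omega)).2 i).isSome, ?_⟩
    apply ((key x).2 _ true _).mpr
    refine ⟨⟨hne, p2, p3, p4, ?_, p6, p7⟩, hn, rfl, ?_, rfl⟩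
    · intro j h
      rw [p5 j (by omega), decide_eq_false (by omega)]
    · rw [p5 (x.length - 1) (by omega), decide_eq_true rfl]

end Stmt12Aux

/-- The `(a+1)`-ary relation `{(D,s₁,…,sₐ) : D ∈ B(Σ,w,k) for some k, and
s₁,…,sₐ ∈ Σ^{≤k}}` is regular. -/
theorem stmt12 (σ : Type) [Fintype σ] [Nonempty σ] (w a : ℕ) (hw : 0 < w) (ha : 0 < a) :
    Regular1a { p : List (Layer σ w) × (Fin a → List σ) |
      IsODD p.1 ∧ ∀ i, p.2 i ≠ [] ∧ (p.2 i).length ≤ p.1.length } := by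
  refine ⟨Stmt12Aux.St w a, Fintype.ofFinite _, Stmt12Aux.M σ w a, ?_⟩
  rw [Stmt12Aux.accepts_eq, Stmt12Aux.lang_eq]
end

section
/- For every alphabet Σ and all w, a ∈ ℕ⁺, the (a+1)-ary relation R̃_∉(Σ,w,a) = {(D, s₁,…,sₐ) : D ∈ B(Σ,w,k) for some k ∈ ℕ⁺, s₁,…,sₐ ∈ Σ^{≤k}, and s_i ∉ L(D) for some i ∈ {1,…,a}} is regular. -/
open FirstOrder

namespace Stmt13

variable {σ : Type} {w a : ℕ}

abbrev Sym (σ : Type) (w a : ℕ) := Option (Layer σ w) × (Fin a → Option σ)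

@[ext] structure Rec (σ : Type) (w a : ℕ) where
  pr : Set (Fin w)
  pf : Bool
  rch : Fin a → Set (Fin w)
  en : Fin a → Prop
  acc : Fin a → Prop

noncomputable instance : Fintype (Rec σ w a) :=
  Fintype.ofInjective (fun r : Rec σ w a => (r.pr, r.pf, r.rch, r.en, r.acc))
    (by rintro ⟨⟩ ⟨⟩ h; simpa using h)

/-- States reachable after `k` layers of `D` reading `t` (with padding). -/
def RS (D : List (Layer σ w)) (t : List σ) : ℕ → Set (Fin w)
  | 0 => if h : 0 < D.length then (D[0]'h).initial else ∅
  | (k+1) => if h : k < D.length then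
      {q | ∃ p ∈ RS D t k, (p, t[k]?, q) ∈ (D[k]'h).trans} else ∅

open scoped Classical in
noncomputable def step : Option (Option (Rec σ w a)) → Sym σ w a → Option (Option (Rec σ w a))
  | _, (none, _) => none
  | none, _ => none
  | some none, (some L, f) =>
      if L.ini = true ∧ ∀ i, f i ≠ none then
        some (some ⟨L.right, L.fin,
          fun i => {q | ∃ p ∈ L.initial, (p, f i, q) ∈ L.trans},
          fun i => f i = none,
          fun i => ∃ q ∈ {q | ∃ p ∈ L.initial, (p, f i, q) ∈ L.trans}, q ∈ L.final⟩)
      else none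
  | some (some r), (some L, f) =>
      if r.pf = false ∧ L.ini = false ∧ L.left = r.pr ∧ ∀ i, r.en i → f i = none then
        some (some ⟨L.right, L.fin,
          fun i => {q | ∃ p ∈ r.rch i, (p, f i, q) ∈ L.trans},
          fun i => f i = none,
          fun i => ∃ q ∈ {q | ∃ p ∈ r.rch i, (p, f i, q) ∈ L.trans}, q ∈ L.final⟩)
      else none

def accept : Set (Option (Option (Rec σ w a))) :=
  {st | ∃ r, st = some (some r) ∧ r.pf = true ∧ ∃ i, ¬ r.acc i}

noncomputable def M (σ : Type) (w a : ℕ) :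
    DFA (Sym σ w a) (Option (Option (Rec σ w a))) :=
  ⟨step, some none, accept⟩

/-- The zipped string of a pair `(D, s)`. -/
def Z (D : List (Layer σ w)) (s : Fin a → List σ) : List (Sym σ w a) :=
  List.ofFn fun j : Fin D.length => (some (D[j]), fun i => (s i)[(j : ℕ)]?)


lemma RS_congr {D D' : List (Layer σ w)} {t t' : List σ} {k : ℕ}
    (hk : k ≤ D.length) (hk' : k ≤ D'.length) (h0 : 0 < D.length) (h0' : 0 < D'.length)
    (hD : ∀ j, (h : j < D.length) → (h' : j < D'.length) → D[j] = D'[j])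
    (ht : ∀ j < k, t[j]? = t'[j]?) :
    RS D t k = RS D' t' k := by
  induction k with
  | zero =>
    simp only [RS, dif_pos h0, dif_pos h0', hD 0 h0 h0']
  | succ k ih =>
    have hkD : k < D.length := by omega
    have hkD' : k < D'.length := by omega
    simp only [RS, dif_pos hkD, dif_pos hkD']
    rw [ih (by omega) (by omega) (fun j hj => ht j (by omega)),
      hD k hkD hkD', ht k (by omega)]

lemma oddAccepts_iff (D : List (Layer σ w)) (t : List σ) (hD : D ≠ []) :
    OddAccepts D t ↔ t ≠ [] ∧ t.length ≤ D.length ∧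
      ∃ q ∈ RS D t D.length,
        q ∈ (D[D.length - 1]'(by have := List.length_pos_iff.mpr hD; omega)).final := by
  have h0 : 0 < D.length := List.length_pos_iff.mpr hD
  constructor
  · rintro ⟨hne, hlen, st, htr, hif⟩
    refine ⟨hne, hlen, st D.length, ?_, (hif h0).2⟩
    have : ∀ k, k ≤ D.length → st k ∈ RS D t k := by
      intro k
      induction k with
      | zero => intro _; simp only [RS, dif_pos h0]; exact (hif h0).1
      | succ k ih =>
        intro hk
        have hkD : k < D.length := by omega
        simp only [RS, dif_pos hkD]
        exact ⟨st k, ih (by omega), htr k hkD⟩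
    exact this D.length le_rfl
  · rintro ⟨hne, hlen, q, hq, hqf⟩
    have key : ∀ k, ∀ q ∈ RS D t k, ∃ st : ℕ → Fin w, st k = q ∧
        (∀ j, j < k → ∀ (hj : j < D.length), (st j, t[j]?, st (j+1)) ∈ (D[j]'hj).trans) ∧
        st 0 ∈ (D[0]'h0).initial := by
      intro k
      induction k with
      | zero =>
        intro q hq
        simp only [RS, dif_pos h0] at hq
        exact ⟨fun _ => q, rfl, by omega, hq⟩
      | succ k ih =>
        intro q hq
        have hkD : k < D.length := by
          by_contra hc
          simp only [RS, dif_neg hc] at hq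
          exact hq
        simp only [RS, dif_pos hkD] at hq
        obtain ⟨p, hp, hpq⟩ := hq
        obtain ⟨st, hstk, htr, h00⟩ := ih p hp
        refine ⟨fun m => if m = k + 1 then q else st m, by simp, ?_, by simpa using h00⟩
        intro j hj hjD
        rcases Nat.lt_or_ge j k with hjk | hjk
        · have e1 : (if j = k + 1 then q else st j) = st j := by
            rw [if_neg (by omega)]
          have e2 : (if j + 1 = k + 1 then q else st (j+1)) = st (j+1) := by
            rw [if_neg (by omega)]
          simp only [e1, e2]; exact htr j hjk hjD
        · have hjk' : j = k := by omega
          subst hjk'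
          have e1 : (if j = j + 1 then q else st j) = p := by
            rw [if_neg (by omega), hstk]
          have e2 : (if j + 1 = j + 1 then q else st (j+1)) = q := by rw [if_pos rfl]
          simp only [e1, e2]; exact hpq
    obtain ⟨st, hstk, htr, h00⟩ := key D.length q hq
    refine ⟨hne, hlen, st, fun i hi => htr i hi hi, fun h => ⟨h00, by rw [hstk]; exact hqf⟩⟩


lemma Z_length (D : List (Layer σ w)) (s : Fin a → List σ) : (Z D s).length = D.length :=
  List.length_ofFn

lemma Z_getElem (D : List (Layer σ w)) (s : Fin a → List σ) {j : ℕ} (hj : j < D.length) :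
    (Z D s)[j]'(by rw [Z_length]; exact hj) = (some (D[j]'hj), fun i => (s i)[j]?) := by
  simp [Z]

lemma fwd (D : List (Layer σ w)) (s : Fin a → List σ) (hD : D ≠ [])
    (hini0 : (D[0]'(List.length_pos_iff.mpr hD)).ini = true)
    (hini : ∀ j, (h : j < D.length) → j ≠ 0 → (D[j]'h).ini = false)
    (hfin : ∀ j, (h : j < D.length) → j ≠ D.length - 1 → (D[j]'h).fin = false)
    (hfr : ∀ j, (h : j + 1 < D.length) → (D[j+1]'h).left = (D[j]'(by omega)).right)
    (hs : ∀ i, s i ≠ [] ∧ (s i).length ≤ D.length) :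
    ∀ k, (h1 : 1 ≤ k) → (hk : k ≤ D.length) →
      List.foldl step (some none) ((Z D s).take k) =
        some (some ⟨(D[k-1]'(by omega)).right, (D[k-1]'(by omega)).fin,
          fun i => RS D (s i) k, fun i => (s i)[k-1]? = none,
          fun i => ∃ q ∈ RS D (s i) k, q ∈ (D[k-1]'(by omega)).final⟩) := by
  have h0 : 0 < D.length := List.length_pos_iff.mpr hD
  intro k
  induction k with
  | zero => omega
  | succ k ih =>
    intro _ hk
    have hkD : k < D.length := by omega
    have htake : (Z D s).take (k+1) = (Z D s).take k ++ [(some (D[k]'hkD), fun i => (s i)[k]?)] := by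
      rw [List.take_succ]
      congr 1
      rw [List.getElem?_eq_getElem (by rw [Z_length]; exact hkD), Z_getElem D s hkD]
      rfl
    rcases Nat.eq_zero_or_pos k with hk0 | hk1
    · subst hk0
      simp only [htake, List.take_zero, List.nil_append, List.foldl_cons, List.foldl_nil]
      simp only [step]
      rw [if_pos ⟨hini0, fun i => by
        rw [List.getElem?_eq_getElem (List.length_pos_iff.mpr (hs i).1)]; simp⟩]
      refine congrArg some (congrArg some ?_)
      have hRS1 : ∀ i, {q | ∃ p ∈ (D[0]'h0).initial, (p, (s i)[0]?, q) ∈ (D[0]'h0).trans}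
          = RS D (s i) 1 := by
        intro i
        simp only [RS, dif_pos h0]
      refine Rec.ext rfl rfl (funext fun i => hRS1 i) rfl (funext fun i => ?_)
      show (∃ q ∈ {q | ∃ p ∈ (D[0]'h0).initial, (p, (s i)[0]?, q) ∈ (D[0]'h0).trans},
        q ∈ (D[0]'h0).final) = _
      rw [hRS1 i]
    · obtain ⟨j, rfl⟩ : ∃ j, k = j + 1 := ⟨k - 1, by omega⟩
      rw [htake, List.foldl_append, ih (by omega) (by omega), List.foldl_cons, List.foldl_nil]
      simp only [step]
      rw [if_pos ⟨hfin j (by omega) (by omega), hini (j+1) hkD (by omega),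
        hfr j (by omega), fun i hi => by
          rw [List.getElem?_eq_none_iff] at hi ⊢
          simp only [Nat.add_sub_cancel] at hi
          omega⟩]
      refine congrArg some (congrArg some ?_)
      have hRS : ∀ i, {q | ∃ p ∈ RS D (s i) (j+1), (p, (s i)[j+1]?, q) ∈ (D[j+1]'hkD).trans}
          = RS D (s i) (j+1+1) := by
        intro i
        simp only [RS, dif_pos hkD]
      refine Rec.ext rfl rfl (funext fun i => hRS i) rfl (funext fun i => ?_)
      show (∃ q ∈ {q | ∃ p ∈ RS D (s i) (j+1), (p, (s i)[j+1]?, q) ∈ (D[j+1]'hkD).trans},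
        q ∈ (D[j+1]'hkD).final) = _
      rw [hRS i]; rfl


lemma getElem_congr_idx {l : List (Layer σ w)} {j j' : ℕ} (e : j = j') (h : j < l.length) :
    l[j]'h = l[j']'(e ▸ h) := by subst e; rfl

lemma step_ne_some_none (st : Option (Option (Rec σ w a))) (c : Sym σ w a) :
    step st c ≠ some none := by
  obtain ⟨c1, f⟩ := c
  rcases c1 with _ | L <;> rcases st with _ | (_ | r) <;>
    simp only [step] <;> first | simp | (split <;> simp)

lemma foldl_eq_some_none {x : List (Sym σ w a)}
    (h : List.foldl step (some none) x = some none) : x = [] := by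
  induction x using List.reverseRecOn with
  | nil => rfl
  | append_singleton y c _ =>
    rw [List.foldl_append, List.foldl_cons, List.foldl_nil] at h
    exact absurd h (step_ne_some_none _ _)

lemma bwd : ∀ (x : List (Sym σ w a)) (r : Rec σ w a),
    List.foldl step (some none) x = some (some r) →
    ∃ (D : List (Layer σ w)) (s : Fin a → List σ) (hD : D ≠ []),
      x = Z D s ∧
      (D[0]'(List.length_pos_iff.mpr hD)).ini = true ∧
      (∀ j, (h : j < D.length) → j ≠ 0 → (D[j]'h).ini = false) ∧
      (∀ j, (h : j < D.length) → j ≠ D.length - 1 → (D[j]'h).fin = false) ∧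
      (∀ j, (h : j + 1 < D.length) → (D[j+1]'h).left = (D[j]'(by omega)).right) ∧
      (∀ i, s i ≠ [] ∧ (s i).length ≤ D.length) ∧
      r.pf = (D[D.length - 1]'(by have := List.length_pos_iff.mpr hD; omega)).fin ∧
      r.pr = (D[D.length - 1]'(by have := List.length_pos_iff.mpr hD; omega)).right ∧
      (∀ i, r.rch i = RS D (s i) D.length) ∧
      (∀ i, r.en i = ((s i)[D.length - 1]? = none)) ∧
      (∀ i, r.acc i = ∃ q ∈ RS D (s i) D.length,
        q ∈ (D[D.length - 1]'(by have := List.length_pos_iff.mpr hD; omega)).final) := by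
  intro x
  induction x using List.reverseRecOn with
  | nil => intro r h; simp at h
  | append_singleton x c ihx =>
    intro r h
    rw [List.foldl_append, List.foldl_cons, List.foldl_nil] at h
    obtain ⟨c1, f⟩ := c
    rcases c1 with _ | L
    · exfalso
      rcases hx : List.foldl step (some none) x with _ | (_ | r') <;>
        rw [hx] at h <;> simp [step] at h
    rcases hx : List.foldl step (some none) x with _ | (_ | r') <;> rw [hx] at h
    · simp [step] at h
    · -- x = [], first layer
      have hx0 : x = [] := foldl_eq_some_none hx
      subst hx0
      simp only [step] at h
      split at h
      case isFalse => simp at h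
      case isTrue hc =>
        obtain ⟨hiniL, hfne⟩ := hc
        simp only [Option.some.injEq] at h
        subst h
        refine ⟨[L], fun i => (f i).toList, by simp, ?_, hiniL, ?_, ?_, ?_, ?_, ?_, ?_, ?_, ?_, ?_⟩
        · -- [] ++ [c] = Z [L] s
          apply List.ext_getElem (by simp [Z_length])
          intro j h1 h2
          rw [Z_length] at h2
          simp only [List.length_singleton] at h2
          interval_cases j
          rw [Z_getElem _ _ (by simp : (0:ℕ) < [L].length)]
          simp only [List.nil_append, List.getElem_singleton]
          refine Prod.ext rfl (funext fun i => ?_)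
          cases hfi : f i <;> simp [hfi]
        · intro j hj hj0; simp at hj; omega
        · intro j hj hj0; simp at hj; simp at hj0; omega
        · intro j hj; simp at hj
        · intro i
          constructor
          · cases hfi : f i
            · exact absurd hfi (hfne i)
            · simp [hfi]
          · cases hfi : f i <;> simp [hfi]
        · rfl
        · rfl
        · intro i
          have : RS [L] ((f i).toList) 1 =
              {q | ∃ p ∈ L.initial, (p, f i, q) ∈ L.trans} := by
            simp only [RS]
            rw [dif_pos (by simp : (0:ℕ) < [L].length)]
            have h0' : (0:ℕ) < [L].length := by simp
            rw [dif_pos h0']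
            have : (Option.toList (f i))[0]? = f i := by cases f i <;> simp
            simp only [List.getElem_singleton, this]
          exact this.symm
        · intro i
          have ht : (Option.toList (f i))[0]? = f i := by cases f i <;> simp
          show (f i = none) = ((Option.toList (f i))[0]? = none)
          rw [ht]
        · intro i
          have hRS : RS [L] ((f i).toList) 1 =
              {q | ∃ p ∈ L.initial, (p, f i, q) ∈ L.trans} := by
            simp only [RS]
            have h0' : (0:ℕ) < [L].length := by simp
            rw [dif_pos h0', dif_pos h0']
            have : (Option.toList (f i))[0]? = f i := by cases f i <;> simp
            simp only [List.getElem_singleton, this]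
          show (∃ q ∈ {q | ∃ p ∈ L.initial, (p, f i, q) ∈ L.trans}, q ∈ L.final)
            = (∃ q ∈ RS [L] ((f i).toList) 1, q ∈ L.final)
          rw [hRS]
    · -- inductive case
      obtain ⟨D, s, hD, hZ, hini0, hini, hfin, hfr, hs, hpf, hpr, hrch, hen, hacc⟩ := ihx r' hx
      have h0 : 0 < D.length := List.length_pos_iff.mpr hD
      simp only [step] at h
      split at h
      case isFalse => simp at h
      case isTrue hc =>
        obtain ⟨hpf0, hiniL, hleft, hend⟩ := hc
        simp only [Option.some.injEq] at h
        subst h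
        set n := D.length with hn
        -- key facts
        have hlen_of : ∀ i u, f i = some u → (s i).length = n := by
          intro i u hu
          have hne : ¬ r'.en i := fun he => by simp [hend i he] at hu
          rw [hen i] at hne
          have := (hs i).2
          have h1 : n - 1 < (s i).length := by
            by_contra hcon
            exact hne (List.getElem?_eq_none (by omega))
          omega
        have hs'j : ∀ i j, j < n → ((s i) ++ (f i).toList)[j]? = (s i)[j]? := by
          intro i j hj
          cases hfi : f i with
          | none => simp
          | some u =>
            rw [List.getElem?_append_left (by rw [hlen_of i u hfi]; exact hj)]
        have hs'n : ∀ i, ((s i) ++ (f i).toList)[n]? = f i := by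
          intro i
          cases hfi : f i with
          | none =>
            simp only [hfi, Option.toList_none, List.append_nil]
            exact List.getElem?_eq_none (by have := (hs i).2; omega)
          | some u =>
            have hl : (s i).length = n := hlen_of i u hfi
            show (s i ++ [u])[n]? = some u
            rw [← hl]
            exact List.getElem?_concat_length
        have hD'len : (D ++ [L]).length = n + 1 := by simp [hn]
        have hD'j : ∀ j (hj : j < n), (D ++ [L])[j]'(by rw [hD'len]; omega) = D[j]'hj := by
          intro j hj
          exact List.getElem_append_left hj
        have hD'n : (D ++ [L])[n]'(by simp [hn]) = L := List.getElem_concat_length rfl _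
        have hRS' : ∀ i, RS (D ++ [L]) ((s i) ++ (f i).toList) (n + 1)
            = {q | ∃ p ∈ RS D (s i) n, (p, f i, q) ∈ L.trans} := by
          intro i
          have hstab : RS (D ++ [L]) ((s i) ++ (f i).toList) n = RS D (s i) n :=
            RS_congr (by rw [hD'len]; omega) le_rfl (by rw [hD'len]; omega) h0
              (fun j hj hj' => hD'j j hj') (fun j hj => hs'j i j (by omega))
          simp only [RS]
          rw [dif_pos (show n < (D ++ [L]).length by rw [hD'len]; omega)]
          rw [hstab, hs'n i, hD'n]
        have e1 : (D ++ [L]).length - 1 = n := by rw [hD'len]; omega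
        have hlast : ∀ (h : (D ++ [L]).length - 1 < (D ++ [L]).length),
            (D ++ [L])[(D ++ [L]).length - 1]'h = L := fun h => by
          rw [getElem_congr_idx e1, hD'n]
        subst hZ
        refine ⟨D ++ [L], (fun i => s i ++ (f i).toList), (by simp), ?_, ?_, ?_, ?_, ?_, ?_,
          ?_, ?_, ?_, ?_, ?_⟩
        · -- convolution equality
          apply List.ext_getElem (by simp [Z_length, hD'len, hn])
          intro j h1 h2
          rw [Z_length, hD'len] at h2
          rcases Nat.lt_or_ge j n with hjn | hjn
          · have hxl : j < (Z D s).length := by rw [Z_length]; exact hjn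
            rw [List.getElem_append_left hxl, Z_getElem D s hjn,
              Z_getElem _ _ (show j < (D++[L]).length by rw [hD'len]; omega)]
            refine Prod.ext ?_ (funext fun i => ?_)
            · simp only [hD'j j hjn]
            · exact (hs'j i j hjn).symm
          · have hje : j = n := by omega
            subst hje
            rw [List.getElem_concat_length (l := Z D s) (i := n) (Z_length D s).symm _,
              Z_getElem _ _ (show n < (D++[L]).length by rw [hD'len]; omega)]
            refine Prod.ext ?_ (funext fun i => ?_)
            · simp only [hD'n]
            · exact (hs'n i).symm
        · rw [hD'j 0 h0]; exact hini0
        · intro j hj hj0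
          rcases Nat.lt_or_ge j n with hjn | hjn
          · rw [hD'j j hjn]; exact hini j hjn hj0
          · have hje : j = n := by rw [hD'len] at hj; omega
            rw [getElem_congr_idx hje, hD'n]; exact hiniL
        · intro j hj hjl
          rw [e1] at hjl
          have hjn : j < n := by rw [hD'len] at hj; omega
          rw [hD'j j hjn]
          by_cases hj1 : j = n - 1
          · subst hj1
            rw [← hpf]; exact hpf0
          · exact hfin j hjn hj1
        · intro j hj
          rw [hD'len] at hj
          rcases Nat.lt_or_ge (j+1) n with hjn | hjn
          · rw [hD'j (j+1) hjn, hD'j j (by omega)]; exact hfr j hjn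
          · have hje : j + 1 = n := by omega
            rw [getElem_congr_idx hje, hD'n, getElem_congr_idx (show j = n - 1 by omega),
              hD'j (n-1) (by omega)]
            rw [hleft, hpr]
        · intro i
          refine ⟨by simp [(hs i).1], ?_⟩
          rw [hD'len, List.length_append]
          have := (hs i).2
          cases f i <;> simp <;> omega
        · show L.fin = _
          rw [hlast]
        · show L.right = _
          rw [hlast]
        · intro i
          show {q | ∃ p ∈ r'.rch i, (p, f i, q) ∈ L.trans} = _
          rw [hD'len, hRS' i, hrch i]
        · intro i
          show (f i = none) = _
          simp only [hD'len, Nat.add_sub_cancel, hs'n i]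
        · intro i
          show (∃ q ∈ {q | ∃ p ∈ r'.rch i, (p, f i, q) ∈ L.trans}, q ∈ L.final) = _
          simp only [hD'len, Nat.add_sub_cancel]
          rw [hRS' i, hD'n, hrch i]

lemma conv1a_eq_Z (D : List (Layer σ w)) (s : Fin a → List σ)
    (hs : ∀ i, (s i).length ≤ D.length) : conv1a D s = Z D s := by
  have hmax : max D.length (Finset.univ.sup fun i => (s i).length) = D.length :=
    max_eq_left (Finset.sup_le fun i _ => hs i)
  apply List.ext_getElem (by simp [conv1a, Z_length, hmax])
  intro j h1 h2
  rw [Z_length] at h2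
  simp only [conv1a, List.getElem_ofFn, Z_getElem D s h2]
  refine Prod.ext ?_ rfl
  simp [List.getElem?_eq_getElem h2]

end Stmt13

theorem stmt13' (σ : Type) (w a : ℕ) :
    Regular1a { p : List (Layer σ w) × (Fin a → List σ) |
      IsODD p.1 ∧ (∀ i, p.2 i ≠ [] ∧ (p.2 i).length ≤ p.1.length) ∧
        ∃ i, p.2 i ∉ OddLang p.1 } := by
  refine ⟨Option (Option (Stmt13.Rec σ w a)), inferInstance, Stmt13.M σ w a, ?_⟩
  ext x
  rw [DFA.mem_accepts]
  show List.foldl Stmt13.step (some none) x ∈ Stmt13.accept ↔ _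
  constructor
  · rintro ⟨r, heq, hpft, i0, hnacc⟩
    obtain ⟨D, s, hD, hZ, hini0, hini, hfin, hfr, hs, hpf, hpr, hrch, hen, hacc⟩ :=
      Stmt13.bwd x r heq
    have h0 : 0 < D.length := List.length_pos_iff.mpr hD
    have hfinlast : (D[D.length - 1]'(by omega)).fin = true := by rw [← hpf]; exact hpft
    refine ⟨(D, s), ⟨⟨hD, fun i h => hfr i h, fun i h => ⟨?_, ?_⟩⟩, hs, ⟨i0, ?_⟩⟩, ?_⟩
    · constructor
      · intro hc
        by_contra hi0
        rw [hini i h hi0] at hc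
        exact Bool.false_ne_true hc
      · rintro rfl; exact hini0
    · constructor
      · intro hc
        by_contra hil
        rw [hfin i h hil] at hc
        exact Bool.false_ne_true hc
      · rintro rfl; exact hfinlast
    · intro hmem
      apply hnacc
      rw [hacc i0]
      have := (Stmt13.oddAccepts_iff D (s i0) hD).mp hmem
      exact this.2.2
    · rw [Stmt13.conv1a_eq_Z D s (fun i => (hs i).2)]
      exact hZ.symm
  · rintro ⟨⟨D, s⟩, ⟨⟨hD, hfr, hflags⟩, hs, i0, hnot⟩, hconv⟩
    have h0 : 0 < D.length := List.length_pos_iff.mpr hD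
    have hini : ∀ j, (h : j < D.length) → j ≠ 0 → (D[j]'h).ini = false := by
      intro j h hj0
      rcases Bool.eq_false_or_eq_true (D[j]'h).ini with hb | hb
      · exact absurd ((hflags j h).1.mp hb) hj0
      · exact hb
    have hfin : ∀ j, (h : j < D.length) → j ≠ D.length - 1 → (D[j]'h).fin = false := by
      intro j h hjl
      rcases Bool.eq_false_or_eq_true (D[j]'h).fin with hb | hb
      · exact absurd ((hflags j h).2.mp hb) hjl
      · exact hb
    have hfold := Stmt13.fwd D s hD ((hflags 0 h0).1.mpr rfl) hini hfin hfr
      (fun i => hs i) D.length (by omega) le_rfl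
    rw [show (Stmt13.Z D s).take D.length = Stmt13.Z D s by
      rw [← Stmt13.Z_length D s]; exact List.take_length] at hfold
    have hx : x = Stmt13.Z D s := by
      rw [← hconv]
      show conv1a D s = Stmt13.Z D s
      exact Stmt13.conv1a_eq_Z D s (fun i => (hs i).2)
    rw [hx, hfold]
    refine ⟨_, rfl, (hflags (D.length - 1) (Nat.sub_lt h0 one_pos)).2.mpr rfl, i0, ?_⟩
    intro hacc
    apply hnot
    unfold OddLang
    show OddAccepts D (s i0)
    rw [Stmt13.oddAccepts_iff D (s i0) hD]
    exact ⟨(hs i0).1, (hs i0).2, hacc⟩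

/-- The `(a+1)`-ary relation `{(D,s₁,…,sₐ) : D ∈ B(Σ,w,k) for some k,
s₁,…,sₐ ∈ Σ^{≤k}, and sᵢ ∉ L(D) for some i}` is regular. -/
theorem stmt13 (σ : Type) [Fintype σ] [Nonempty σ] (w a : ℕ) (hw : 0 < w) (ha : 0 < a) :
    Regular1a { p : List (Layer σ w) × (Fin a → List σ) |
      IsODD p.1 ∧ (∀ i, p.2 i ≠ [] ∧ (p.2 i).length ≤ p.1.length) ∧
        ∃ i, p.2 i ∉ OddLang p.1 } :=
  stmt13' σ w a
end
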